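/- arXiv:math/0202267 — 4 statements merged into one kernel-verified Lean document; each statement's English description precedes it below -/
import Mathlib

section
/- The number of 3×3 matrices with nonnegative integer entries in which every row and every column sums to t equals 3·binom(t+3, 4) + binom(t+2, 2). -/
open Finset

/-! ### Counting lattice simplices -/

private def D2 (n : ℕ) : Finset (ℕ × ℕ) :=
  (range (n+1) ×ˢ range (n+1)).filter fun p => p.1 + p.2 ≤ n

private def D3 (n : ℕ) : Finset (ℕ × ℕ × ℕ) :=
  (range (n+1) ×ˢ range (n+1) ×ˢ range (n+1)).filter fun p => p.1 + p.2.1 + p.2.2 ≤ n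

private def D4 (n : ℕ) : Finset (ℕ × ℕ × ℕ × ℕ) :=
  (range (n+1) ×ˢ range (n+1) ×ˢ range (n+1) ×ˢ range (n+1)).filter
    fun p => p.1 + p.2.1 + p.2.2.1 + p.2.2.2 ≤ n

private lemma mem_D2 {n : ℕ} {p : ℕ × ℕ} : p ∈ D2 n ↔ p.1 + p.2 ≤ n := by
  simp only [D2, mem_filter, mem_product, mem_range, Nat.lt_succ_iff]
  omega

private lemma mem_D3 {n : ℕ} {p : ℕ × ℕ × ℕ} : p ∈ D3 n ↔ p.1 + p.2.1 + p.2.2 ≤ n := by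
  simp only [D3, mem_filter, mem_product, mem_range, Nat.lt_succ_iff]
  omega

private lemma mem_D4 {n : ℕ} {p : ℕ × ℕ × ℕ × ℕ} :
    p ∈ D4 n ↔ p.1 + p.2.1 + p.2.2.1 + p.2.2.2 ≤ n := by
  simp only [D4, mem_filter, mem_product, mem_range, Nat.lt_succ_iff]
  omega

private lemma sum_shift (n k : ℕ) :
    ∑ a ∈ range (n+1), (n - a + k).choose k = (n + k + 1).choose (k+1) := by
  rw [← Nat.sum_range_add_choose n k]
  exact Finset.sum_range_reflect (fun j => (j + k).choose k) (n+1)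

private lemma card_D2 (n : ℕ) : (D2 n).card = (n+2).choose 2 := by
  have h : (D2 n).card = ((range (n+1)).sigma fun a => range (n + 1 - a)).card := by
    refine Finset.card_bij' (fun p _ => (⟨p.1, p.2⟩ : Σ _ : ℕ, ℕ)) (fun q _ => (q.1, q.2)) ?_ ?_ ?_ ?_
    · intro p hp
      rw [mem_D2] at hp
      simp only [mem_sigma, mem_range]
      omega
    · intro q hq
      simp only [mem_sigma, mem_range] at hq
      rw [mem_D2]
      dsimp only
      omega
    · intro p _; rfl
    · intro q _; rfl
  rw [h, Finset.card_sigma]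
  simp only [card_range]
  have : ∀ a ∈ range (n+1), n + 1 - a = (n - a + 1).choose 1 := by
    intro a ha
    rw [Nat.choose_one_right]
    rw [mem_range] at ha
    omega
  rw [Finset.sum_congr rfl this, sum_shift n 1]

private lemma card_D3 (n : ℕ) : (D3 n).card = (n+3).choose 3 := by
  have h : (D3 n).card = ((range (n+1)).sigma fun a => D2 (n - a)).card := by
    refine Finset.card_bij' (fun p _ => (⟨p.1, (p.2.1, p.2.2)⟩ : Σ _ : ℕ, ℕ × ℕ))
      (fun q _ => (q.1, q.2.1, q.2.2)) ?_ ?_ ?_ ?_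
    · intro p hp
      rw [mem_D3] at hp
      simp only [mem_sigma, mem_range, mem_D2]
      omega
    · intro q hq
      simp only [mem_sigma, mem_range, mem_D2] at hq
      rw [mem_D3]
      dsimp only
      omega
    · intro p _; rfl
    · intro q _; rfl
  rw [h, Finset.card_sigma]
  have : ∀ a ∈ range (n+1), (D2 (n-a)).card = (n - a + 2).choose 2 := fun a _ => card_D2 _
  rw [Finset.sum_congr rfl this, sum_shift n 2]

private lemma card_D4 (n : ℕ) : (D4 n).card = (n+4).choose 4 := by
  have h : (D4 n).card = ((range (n+1)).sigma fun a => D3 (n - a)).card := by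
    refine Finset.card_bij' (fun p _ => (⟨p.1, (p.2.1, p.2.2.1, p.2.2.2)⟩ : Σ _ : ℕ, ℕ × ℕ × ℕ))
      (fun q _ => (q.1, q.2.1, q.2.2.1, q.2.2.2)) ?_ ?_ ?_ ?_
    · intro p hp
      rw [mem_D4] at hp
      simp only [mem_sigma, mem_range, mem_D3]
      omega
    · intro q hq
      simp only [mem_sigma, mem_range, mem_D3] at hq
      rw [mem_D4]
      dsimp only
      omega
    · intro p _; rfl
    · intro q _; rfl
  rw [h, Finset.card_sigma]
  have : ∀ a ∈ range (n+1), (D3 (n-a)).card = (n - a + 3).choose 3 := fun a _ => card_D3 _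
  rw [Finset.sum_congr rfl this, sum_shift n 3]

/-! ### Binomial arithmetic -/

private lemma two_mul_choose (n : ℕ) : 2 * (n+2).choose 2 = (n+2) * (n+1) := by
  induction n with
  | zero => decide
  | succ n ih =>
    have h : (n+3).choose 2 = (n+2).choose 1 + (n+2).choose 2 := Nat.choose_succ_succ (n+2) 1
    rw [show n+1+2 = n+3 by ring, h, Nat.choose_one_right, Nat.mul_add, ih]
    ring

private lemma six_mul_choose (n : ℕ) : 6 * (n+3).choose 3 = (n+3) * (n+2) * (n+1) := by
  induction n with
  | zero => decide
  | succ n ih =>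
    have h : (n+4).choose 3 = (n+3).choose 2 + (n+3).choose 3 := Nat.choose_succ_succ (n+3) 2
    have h2 : 2 * (n+3).choose 2 = (n+3) * (n+2) := two_mul_choose (n+1)
    rw [show n+1+3 = n+4 by ring, h, Nat.mul_add,
      show 6 * (n+3).choose 2 = 3 * (2 * (n+3).choose 2) by ring, h2, ih]
    ring

private lemma tf_mul_choose (n : ℕ) : 24 * (n+3).choose 4 = (n+3) * (n+2) * (n+1) * n := by
  induction n with
  | zero => decide
  | succ n ih =>
    have h : (n+4).choose 4 = (n+3).choose 3 + (n+3).choose 4 := Nat.choose_succ_succ (n+3) 3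
    rw [show n+1+3 = n+4 by ring, h, Nat.mul_add,
      show 24 * (n+3).choose 3 = 4 * (6 * (n+3).choose 3) by ring, six_mul_choose n, ih]
    ring

private lemma key_identity (t : ℕ) :
    (t+2).choose 2 * (t+2).choose 2 = 6 * (t+3).choose 4 + (t+2).choose 2 := by
  apply Nat.eq_of_mul_eq_mul_left (show 0 < 4 by norm_num)
  have e1 : 4 * ((t+2).choose 2 * (t+2).choose 2)
      = (2 * (t+2).choose 2) * (2 * (t+2).choose 2) := by ring
  have e2 : 4 * (6 * (t+3).choose 4 + (t+2).choose 2) =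
      24 * (t+3).choose 4 + 2 * (2 * (t+2).choose 2) := by ring
  rw [e1, e2, two_mul_choose, tf_mul_choose]
  ring

/-! ### The corner sets -/

private def box4 (t : ℕ) : Finset (ℕ × ℕ × ℕ × ℕ) :=
  range (t+1) ×ˢ range (t+1) ×ˢ range (t+1) ×ˢ range (t+1)

private def Aset (t : ℕ) : Finset (ℕ × ℕ × ℕ × ℕ) :=
  (box4 t).filter fun x => x.1 + x.2.1 ≤ t ∧ x.2.2.1 + x.2.2.2 ≤ t ∧
    x.1 + x.2.2.1 ≤ t ∧ x.2.1 + x.2.2.2 ≤ t ∧ t ≤ x.1 + x.2.1 + x.2.2.1 + x.2.2.2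

private def Pset (t : ℕ) : Finset (ℕ × ℕ × ℕ × ℕ) :=
  (box4 t).filter fun x => x.1 + x.2.1 ≤ t ∧ x.2.2.1 + x.2.2.2 ≤ t

private def V1 (t : ℕ) : Finset (ℕ × ℕ × ℕ × ℕ) :=
  (box4 t).filter fun x => x.1 + x.2.1 ≤ t ∧ x.2.2.1 + x.2.2.2 ≤ t ∧ t + 1 ≤ x.1 + x.2.2.1

private def V2 (t : ℕ) : Finset (ℕ × ℕ × ℕ × ℕ) :=
  (box4 t).filter fun x => x.1 + x.2.1 ≤ t ∧ x.2.2.1 + x.2.2.2 ≤ t ∧ t + 1 ≤ x.2.1 + x.2.2.2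

private def V3 (t : ℕ) : Finset (ℕ × ℕ × ℕ × ℕ) :=
  (box4 t).filter fun x => x.1 + x.2.1 + x.2.2.1 + x.2.2.2 + 1 ≤ t

private lemma mem_box4 {t : ℕ} {x : ℕ × ℕ × ℕ × ℕ} :
    x ∈ box4 t ↔ x.1 ≤ t ∧ x.2.1 ≤ t ∧ x.2.2.1 ≤ t ∧ x.2.2.2 ≤ t := by
  simp only [box4, mem_product, mem_range, Nat.lt_succ_iff]

private lemma mem_Aset {t : ℕ} {x : ℕ × ℕ × ℕ × ℕ} :
    x ∈ Aset t ↔ x.1 + x.2.1 ≤ t ∧ x.2.2.1 + x.2.2.2 ≤ t ∧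
      x.1 + x.2.2.1 ≤ t ∧ x.2.1 + x.2.2.2 ≤ t ∧ t ≤ x.1 + x.2.1 + x.2.2.1 + x.2.2.2 := by
  simp only [Aset, mem_filter, mem_box4]; omega

private lemma mem_Pset {t : ℕ} {x : ℕ × ℕ × ℕ × ℕ} :
    x ∈ Pset t ↔ x.1 + x.2.1 ≤ t ∧ x.2.2.1 + x.2.2.2 ≤ t := by
  simp only [Pset, mem_filter, mem_box4]; omega

private lemma mem_V1 {t : ℕ} {x : ℕ × ℕ × ℕ × ℕ} :
    x ∈ V1 t ↔ x.1 + x.2.1 ≤ t ∧ x.2.2.1 + x.2.2.2 ≤ t ∧ t + 1 ≤ x.1 + x.2.2.1 := by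
  simp only [V1, mem_filter, mem_box4]; omega

private lemma mem_V2 {t : ℕ} {x : ℕ × ℕ × ℕ × ℕ} :
    x ∈ V2 t ↔ x.1 + x.2.1 ≤ t ∧ x.2.2.1 + x.2.2.2 ≤ t ∧ t + 1 ≤ x.2.1 + x.2.2.2 := by
  simp only [V2, mem_filter, mem_box4]; omega

private lemma mem_V3 {t : ℕ} {x : ℕ × ℕ × ℕ × ℕ} :
    x ∈ V3 t ↔ x.1 + x.2.1 + x.2.2.1 + x.2.2.2 + 1 ≤ t := by
  simp only [V3, mem_filter, mem_box4]; omega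

private lemma card_V3 (t : ℕ) : (V3 t).card = (t+3).choose 4 := by
  cases t with
  | zero =>
    rw [show V3 0 = ∅ by ext x; simp only [mem_V3, notMem_empty, iff_false]; omega]
    decide
  | succ n =>
    rw [show V3 (n+1) = D4 n by ext x; rw [mem_V3, mem_D4]; omega, card_D4]

private lemma card_V1 (t : ℕ) : (V1 t).card = (t+3).choose 4 := by
  rw [← card_V3 t]
  refine Finset.card_bij'
    (fun x _ => (x.2.1, t - x.1 - x.2.1, x.2.2.2, t - x.2.2.1 - x.2.2.2))
    (fun y _ => (t - y.1 - y.2.1, y.1, t - y.2.2.1 - y.2.2.2, y.2.2.1)) ?_ ?_ ?_ ?_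
  · intro x hx
    rw [mem_V1] at hx
    rw [mem_V3]
    dsimp only
    omega
  · intro y hy
    rw [mem_V3] at hy
    rw [mem_V1]
    dsimp only
    omega
  · intro x hx
    rw [mem_V1] at hx
    obtain ⟨a, b, c, d⟩ := x
    dsimp only at hx ⊢
    simp only [Prod.mk.injEq, and_true, true_and]
    omega
  · intro y hy
    rw [mem_V3] at hy
    obtain ⟨p, q, r, s⟩ := y
    dsimp only at hy ⊢
    simp only [Prod.mk.injEq, and_true, true_and]
    omega

private lemma card_V2 (t : ℕ) : (V2 t).card = (t+3).choose 4 := by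
  rw [← card_V3 t]
  refine Finset.card_bij'
    (fun x _ => (x.1, t - x.1 - x.2.1, x.2.2.1, t - x.2.2.1 - x.2.2.2))
    (fun y _ => (y.1, t - y.1 - y.2.1, y.2.2.1, t - y.2.2.1 - y.2.2.2)) ?_ ?_ ?_ ?_
  · intro x hx
    rw [mem_V2] at hx
    rw [mem_V3]
    dsimp only
    omega
  · intro y hy
    rw [mem_V3] at hy
    rw [mem_V2]
    dsimp only
    omega
  · intro x hx
    rw [mem_V2] at hx
    obtain ⟨a, b, c, d⟩ := x
    dsimp only at hx ⊢
    simp only [Prod.mk.injEq, and_true, true_and]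
    omega
  · intro y hy
    rw [mem_V3] at hy
    obtain ⟨p, q, r, s⟩ := y
    dsimp only at hy ⊢
    simp only [Prod.mk.injEq, and_true, true_and]
    omega

private lemma card_Pset (t : ℕ) : (Pset t).card = (t+2).choose 2 * (t+2).choose 2 := by
  have h : (Pset t).card = (D2 t ×ˢ D2 t).card := by
    refine Finset.card_bij' (fun x _ => ((x.1, x.2.1), (x.2.2.1, x.2.2.2)))
      (fun y _ => (y.1.1, y.1.2, y.2.1, y.2.2)) ?_ ?_ ?_ ?_
    · intro x hx
      rw [mem_Pset] at hx
      simp only [mem_product, mem_D2]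
      exact hx
    · intro y hy
      simp only [mem_product, mem_D2] at hy
      rw [mem_Pset]
      dsimp only
      omega
    · intro x _; rfl
    · intro y _; rfl
  rw [h, Finset.card_product, card_D2]

private lemma card_Aset (t : ℕ) : (Aset t).card = 3 * (t+3).choose 4 + (t+2).choose 2 := by
  have hunion : Pset t = ((Aset t ∪ V1 t) ∪ V2 t) ∪ V3 t := by
    ext x
    simp only [mem_union, mem_Pset, mem_Aset, mem_V1, mem_V2, mem_V3]
    omega
  have d1 : Disjoint (Aset t) (V1 t) := by
    rw [Finset.disjoint_left]
    intro x hx hx'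
    rw [mem_Aset] at hx; rw [mem_V1] at hx'
    omega
  have d2 : Disjoint (Aset t ∪ V1 t) (V2 t) := by
    rw [Finset.disjoint_left]
    intro x hx hx'
    rw [mem_union, mem_Aset, mem_V1] at hx; rw [mem_V2] at hx'
    omega
  have d3 : Disjoint ((Aset t ∪ V1 t) ∪ V2 t) (V3 t) := by
    rw [Finset.disjoint_left]
    intro x hx hx'
    rw [mem_union, mem_union, mem_Aset, mem_V1, mem_V2] at hx; rw [mem_V3] at hx'
    omega
  have hcards : (Pset t).card = (Aset t).card + (V1 t).card + (V2 t).card + (V3 t).card := by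
    rw [hunion, Finset.card_union_of_disjoint d3, Finset.card_union_of_disjoint d2,
      Finset.card_union_of_disjoint d1]
  rw [card_Pset, card_V1, card_V2, card_V3, key_identity] at hcards
  omega

/-- MacMahon's formula: the number of 3×3 nonnegative-integer matrices with all
row and column sums equal to `t` is `3 * C(t+3, 4) + C(t+2, 2)`. -/
theorem birkhoff_H3_macmahon (t : ℕ) :
    Nat.card {M : Matrix (Fin 3) (Fin 3) ℕ //
      (∀ i, ∑ j, M i j = t) ∧ (∀ j, ∑ i, M i j = t)} =
      3 * Nat.choose (t + 3) 4 + Nat.choose (t + 2) 2 := by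
  have e : {M : Matrix (Fin 3) (Fin 3) ℕ //
      (∀ i, ∑ j, M i j = t) ∧ (∀ j, ∑ i, M i j = t)} ≃ {x // x ∈ Aset t} :=
    { toFun := fun M => ⟨(M.1 0 0, M.1 0 1, M.1 1 0, M.1 1 1), by
        obtain ⟨M, hr, hc⟩ := M
        have r0 := hr 0; have r1 := hr 1; have r2 := hr 2
        have c0 := hc 0; have c1 := hc 1; have c2 := hc 2
        rw [Fin.sum_univ_three] at r0 r1 r2 c0 c1 c2
        rw [mem_Aset]
        dsimp only
        omega⟩
      invFun := fun x => ⟨Matrix.of ![![x.1.1, x.1.2.1, t - x.1.1 - x.1.2.1],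
          ![x.1.2.2.1, x.1.2.2.2, t - x.1.2.2.1 - x.1.2.2.2],
          ![t - x.1.1 - x.1.2.2.1, t - x.1.2.1 - x.1.2.2.2,
            x.1.1 + x.1.2.1 + x.1.2.2.1 + x.1.2.2.2 - t]], by
        obtain ⟨⟨a, b, c, d⟩, hx⟩ := x
        rw [mem_Aset] at hx
        dsimp only at hx
        constructor
        · intro i
          fin_cases i <;> simp [Fin.sum_univ_three] <;> omega
        · intro j
          fin_cases j <;> simp [Fin.sum_univ_three] <;> omega⟩
      left_inv := fun M => by
        obtain ⟨M, hr, hc⟩ := M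
        apply Subtype.ext
        have r0 := hr 0; have r1 := hr 1; have r2 := hr 2
        have c0 := hc 0; have c1 := hc 1; have c2 := hc 2
        rw [Fin.sum_univ_three] at r0 r1 r2 c0 c1 c2
        dsimp only
        ext i j
        fin_cases i <;> fin_cases j <;> simp [Matrix.of_apply] <;> omega
      right_inv := fun x => by
        obtain ⟨⟨a, b, c, d⟩, hx⟩ := x
        apply Subtype.ext
        simp }
  rw [Nat.card_congr e, Nat.card_eq_finsetCard, card_Aset]
end

section
/- The number of 3×3 semi-magic squares with line sum t equals (1/8)t^4 + (3/4)t^3 + (15/8)t^2 + (9/4)t + 1. -/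
open Finset

private lemma vec6_five {α : Type*} (a b c d e f : α) : ![a,b,c,d,e,f] 5 = f := rfl

private lemma multiset_card_finsum {α β : Type*} (s : Finset α) (f : α → Multiset β) :
    Multiset.card (∑ i ∈ s, f i) = ∑ i ∈ s, Multiset.card (f i) := by
  classical
  induction s using Finset.induction with
  | empty => simp
  | insert _ _ h ih => simp [Finset.sum_insert h, ih]

/-- Stars and bars as an equiv to `Sym`. -/
private def compEquivSym (k n : ℕ) : {v : Fin k → ℕ // ∑ i, v i = n} ≃ Sym (Fin k) n where
  toFun v := ⟨∑ i : Fin k, Multiset.replicate (v.1 i) i, by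
    simp [multiset_card_finsum, v.2]⟩
  invFun s := ⟨fun i => Multiset.count i s.1, by
    simpa using (Multiset.sum_count_eq_card (s := univ) (m := s.1)
      (fun a _ => mem_univ a)).trans s.1.2⟩
  left_inv v := by
    ext i
    simp [Multiset.count_sum', Multiset.count_replicate]
  right_inv s := by
    ext1; ext a
    simp [Multiset.count_sum', Multiset.count_replicate]

private lemma comp_card (k n : ℕ) :
    Nat.card {v : Fin k → ℕ // ∑ i, v i = n} = (k + n - 1).choose n := by
  rw [Nat.card_congr (compEquivSym k n), Nat.card_eq_fintype_card, Sym.card_sym_eq_choose]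
  simp

private def Pz (v : Fin 6 → ℕ) : Prop := v 0 = 0 ∨ v 1 = 0 ∨ v 2 = 0

private def toMat (v : Fin 6 → ℕ) : Matrix (Fin 3) (Fin 3) ℕ :=
  ![![v 0 + v 5, v 1 + v 3, v 2 + v 4],
    ![v 2 + v 3, v 0 + v 4, v 1 + v 5],
    ![v 1 + v 4, v 2 + v 5, v 0 + v 3]]

private def toVec (M : Matrix (Fin 3) (Fin 3) ℕ) : Fin 6 → ℕ :=
  let a := if M 0 0 - M 1 2 ≤ M 2 2 - M 1 0 then M 2 2 - M 1 0 else M 0 0 - M 1 2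
  ![a, a + M 1 2 - M 0 0, a + M 1 0 - M 2 2, M 2 2 - a, M 1 1 - a, M 0 0 - a]

private lemma toMat_rows (v : Fin 6 → ℕ) (t : ℕ) (hs : ∑ i, v i = t) :
    (∀ i, ∑ j, toMat v i j = t) ∧ (∀ j, ∑ i, toMat v i j = t) := by
  simp only [Fin.sum_univ_six] at hs
  constructor <;> intro i <;> fin_cases i <;>
    simp [toMat, Fin.sum_univ_three] <;> omega

private lemma toVec_mem (M : Matrix (Fin 3) (Fin 3) ℕ) (t : ℕ)
    (hr : ∀ i, ∑ j, M i j = t) (hc : ∀ j, ∑ i, M i j = t) :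
    (∑ i, toVec M i = t) ∧ Pz (toVec M) := by
  have h0 := hr 0; have h1 := hr 1; have h2 := hr 2
  have g0 := hc 0; have g1 := hc 1; have g2 := hc 2
  simp only [Fin.sum_univ_three] at h0 h1 h2 g0 g1 g2
  simp only [toVec, Pz]
  split_ifs <;> constructor <;> simp [Fin.sum_univ_six, vec6_five] <;> omega

private lemma toVec_toMat (v : Fin 6 → ℕ) (hz : Pz v) : toVec (toMat v) = v := by
  rw [Pz] at hz
  ext i
  fin_cases i <;> simp [toMat, toVec, vec6_five] <;> split_ifs <;> omega

private lemma toMat_toVec (M : Matrix (Fin 3) (Fin 3) ℕ) (t : ℕ)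
    (hr : ∀ i, ∑ j, M i j = t) (hc : ∀ j, ∑ i, M i j = t) :
    toMat (toVec M) = M := by
  have h0 := hr 0; have h1 := hr 1; have h2 := hr 2
  have g0 := hc 0; have g1 := hc 1; have g2 := hc 2
  simp only [Fin.sum_univ_three] at h0 h1 h2 g0 g1 g2
  ext i j
  fin_cases i <;> fin_cases j <;> simp [toMat, toVec, vec6_five] <;>
    split_ifs <;> omega

private def matEquivVec (t : ℕ) :
    {M : Matrix (Fin 3) (Fin 3) ℕ //
      (∀ i, ∑ j, M i j = t) ∧ (∀ j, ∑ i, M i j = t)} ≃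
    {v : Fin 6 → ℕ // (∑ i, v i = t) ∧ Pz v} where
  toFun M := ⟨toVec M.1, toVec_mem M.1 t M.2.1 M.2.2⟩
  invFun v := ⟨toMat v.1, toMat_rows v.1 t v.2.1⟩
  left_inv M := Subtype.ext (toMat_toVec M.1 t M.2.1 M.2.2)
  right_inv v := Subtype.ext (toVec_toMat v.1 v.2.2)

private def shiftEquiv (s : ℕ) :
    {v : Fin 6 → ℕ // (∑ i, v i = s + 3) ∧ ¬ Pz v} ≃
    {w : Fin 6 → ℕ // ∑ i, w i = s} where
  toFun v := ⟨![v.1 0 - 1, v.1 1 - 1, v.1 2 - 1, v.1 3, v.1 4, v.1 5], by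
    obtain ⟨vv, hs, hn⟩ := v
    rw [Pz] at hn
    push_neg at hn
    simp only [Fin.sum_univ_six] at hs ⊢
    simp [vec6_five]
    omega⟩
  invFun w := ⟨![w.1 0 + 1, w.1 1 + 1, w.1 2 + 1, w.1 3, w.1 4, w.1 5], by
    obtain ⟨ww, hs⟩ := w
    rw [Pz]
    push_neg
    constructor
    · simp only [Fin.sum_univ_six] at hs ⊢
      simp [vec6_five]
      omega
    · simp⟩
  left_inv v := by
    obtain ⟨vv, hs, hn⟩ := v
    rw [Pz] at hn
    push_neg at hn
    ext i : 2
    fin_cases i <;> simp [vec6_five] <;> omega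
  right_inv w := by
    ext i : 2
    fin_cases i <;> simp [vec6_five]

private lemma cast_choose5 (n : ℕ) :
    (((n + 5).choose 5 : ℕ) : ℚ)
      = (n + 1) * (n + 2) * (n + 3) * (n + 4) * (n + 5) / 120 := by
  rw [Nat.cast_choose ℚ (by omega : 5 ≤ n + 5), show n + 5 - 5 = n from by omega,
    show n + 5 = (n + 4) + 1 from rfl, Nat.factorial_succ,
    show n + 4 = (n + 3) + 1 from rfl, Nat.factorial_succ,
    show n + 3 = (n + 2) + 1 from rfl, Nat.factorial_succ,
    show n + 2 = (n + 1) + 1 from rfl, Nat.factorial_succ,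
    show n + 1 = n + 1 from rfl, Nat.factorial_succ]
  have hn : ((n.factorial : ℕ) : ℚ) ≠ 0 := by
    exact_mod_cast n.factorial_ne_zero
  push_cast
  rw [show ((Nat.factorial 5 : ℕ) : ℚ) = 120 from by norm_num [Nat.factorial]]
  field_simp
  ring

private lemma hsplit_lemma (t : ℕ) :
    Nat.card {v : Fin 6 → ℕ // (∑ i, v i = t) ∧ Pz v}
      + Nat.card {v : Fin 6 → ℕ // (∑ i, v i = t) ∧ ¬ Pz v}
      = Nat.card {v : Fin 6 → ℕ // ∑ i, v i = t} := by
  classical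
  have hTfin : Finite {v : Fin 6 → ℕ // ∑ i, v i = t} :=
    Finite.of_equiv _ (compEquivSym 6 t).symm
  have e1 : {v : Fin 6 → ℕ // (∑ i, v i = t) ∧ Pz v} ≃
      {x : {v : Fin 6 → ℕ // ∑ i, v i = t} // Pz x.1} :=
    (Equiv.subtypeSubtypeEquivSubtypeInter _ _).symm
  have e2 : {v : Fin 6 → ℕ // (∑ i, v i = t) ∧ ¬ Pz v} ≃
      {x : {v : Fin 6 → ℕ // ∑ i, v i = t} // ¬ Pz x.1} :=
    (Equiv.subtypeSubtypeEquivSubtypeInter _ _).symm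
  rw [Nat.card_congr e1, Nat.card_congr e2, ← Nat.card_sum]
  exact Nat.card_congr (Equiv.sumCompl _)

private lemma hT_lemma (t : ℕ) :
    Nat.card {v : Fin 6 → ℕ // ∑ i, v i = t} = (t + 5).choose 5 := by
  rw [comp_card]
  have h1 : 6 + t - 1 = t + 5 := by omega
  have h2 : (t + 5) - 5 = t := by omega
  rw [h1, ← Nat.choose_symm (Nat.le_add_left 5 t), h2]

private lemma hB_lemma (t : ℕ) :
    Nat.card {v : Fin 6 → ℕ // (∑ i, v i = t) ∧ ¬ Pz v} = (t + 2).choose 5 := by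
  rcases Nat.lt_or_ge t 3 with h3 | h3
  · rw [Nat.choose_eq_zero_of_lt (by omega)]
    have he : IsEmpty {v : Fin 6 → ℕ // (∑ i, v i = t) ∧ ¬ Pz v} := by
      constructor
      rintro ⟨v, hs, hn⟩
      rw [Pz] at hn
      push_neg at hn
      simp only [Fin.sum_univ_six] at hs
      omega
    exact Nat.card_eq_zero.mpr (Or.inl he)
  · obtain ⟨s, rfl⟩ : ∃ s, t = s + 3 := ⟨t - 3, by omega⟩
    rw [Nat.card_congr (shiftEquiv s), comp_card]
    have h1 : 6 + s - 1 = s + 5 := by omega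
    have h2 : (s + 5) - 5 = s := by omega
    have h3' : s + 3 + 2 = s + 5 := by omega
    rw [h1, h3', ← Nat.choose_symm (Nat.le_add_left 5 s), h2]

private lemma key_lemma (t : ℕ) :
    Nat.card {M : Matrix (Fin 3) (Fin 3) ℕ //
      (∀ i, ∑ j, M i j = t) ∧ (∀ j, ∑ i, M i j = t)}
      + (t + 2).choose 5 = (t + 5).choose 5 := by
  rw [Nat.card_congr (matEquivVec t), ← hB_lemma t, hsplit_lemma t, hT_lemma t]

private lemma final_calc (t N : ℕ) (key : N + (t + 2).choose 5 = (t + 5).choose 5) :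
    (N : ℚ) = (1 / 8) * (t : ℚ) ^ 4 + (3 / 4) * (t : ℚ) ^ 3 + (15 / 8) * (t : ℚ) ^ 2
        + (9 / 4) * (t : ℚ) + 1 := by
  have keyQ : (N : ℚ) = (((t + 5).choose 5 : ℕ) : ℚ) - (((t + 2).choose 5 : ℕ) : ℚ) := by
    have := congrArg (fun n : ℕ => (n : ℚ)) key
    push_cast at this
    linarith
  rw [keyQ, cast_choose5 t]
  rcases Nat.lt_or_ge t 3 with h3 | h3
  · interval_cases t <;> norm_num [Nat.choose]
  · obtain ⟨s, rfl⟩ : ∃ s, t = s + 3 := ⟨t - 3, by omega⟩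
    rw [show s + 3 + 2 = s + 5 from by omega, cast_choose5 s]
    push_cast
    ring

/-- The number of 3×3 semi-magic squares with line sum `t` equals
`(1/8)t⁴ + (3/4)t³ + (15/8)t² + (9/4)t + 1`. -/
theorem birkhoff_H3_poly (t : ℕ) :
    (Nat.card {M : Matrix (Fin 3) (Fin 3) ℕ //
      (∀ i, ∑ j, M i j = t) ∧ (∀ j, ∑ i, M i j = t)} : ℚ) =
      (1 / 8) * (t : ℚ) ^ 4 + (3 / 4) * (t : ℚ) ^ 3 + (15 / 8) * (t : ℚ) ^ 2
        + (9 / 4) * (t : ℚ) + 1 :=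
  final_calc t _ (key_lemma t)
end

section
/- If H_n is the Ehrhart polynomial of the n-th Birkhoff polytope, then H_n(−1) = H_n(−2) = ... = H_n(−n+1) = 0. -/
open Finset Polynomial

namespace BirkhoffZeros

/-- The finite set of `n × n` matrices of naturals with all row sums and column sums
equal to `t` and support contained in `G`. -/
def magicSet (n : ℕ) (G : Finset (Fin n × Fin n)) (t : ℕ) : Finset (Fin n → Fin n → ℕ) :=
  (Fintype.piFinset fun _ : Fin n => Fintype.piFinset fun _ : Fin n => Finset.range (t + 1)).filter
    (fun M => (∀ i, ∑ j, M i j = t) ∧ (∀ j, ∑ i, M i j = t) ∧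
      ∀ p : Fin n × Fin n, p ∉ G → M p.1 p.2 = 0)

lemma mem_magicSet {n : ℕ} {G : Finset (Fin n × Fin n)} {t : ℕ} {M : Fin n → Fin n → ℕ} :
    M ∈ magicSet n G t ↔ (∀ i, ∑ j, M i j = t) ∧ (∀ j, ∑ i, M i j = t) ∧
      ∀ p : Fin n × Fin n, p ∉ G → M p.1 p.2 = 0 := by
  unfold magicSet
  rw [Finset.mem_filter]
  constructor
  · exact fun h => h.2
  · intro h
    refine ⟨?_, h⟩
    rw [Fintype.mem_piFinset]
    intro i
    rw [Fintype.mem_piFinset]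
    intro j
    rw [Finset.mem_range, Nat.lt_succ_iff]
    calc M i j ≤ ∑ j', M i j' :=
        Finset.single_le_sum (fun _ _ => Nat.zero_le _) (Finset.mem_univ j)
    _ = t := h.1 i

lemma magicSet_sdiff {n : ℕ} (G T : Finset (Fin n × Fin n)) (t : ℕ) :
    magicSet n (G \ T) t = (magicSet n G t).filter (fun M => ∀ p ∈ T, M p.1 p.2 = 0) := by
  ext M
  simp only [mem_magicSet, Finset.mem_filter, Finset.mem_sdiff]
  constructor
  · rintro ⟨h1, h2, h3⟩
    refine ⟨⟨h1, h2, fun p hp => h3 p (fun hps => hp hps.1)⟩, ?_⟩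
    · intro p hp
      exact h3 p (fun hps => hps.2 hp)
  · rintro ⟨⟨h1, h2, h3⟩, h4⟩
    refine ⟨h1, h2, fun p hp => ?_⟩
    by_cases hT : p ∈ T
    · exact h4 p hT
    · exact h3 p (fun hG => hp ⟨hG, hT⟩)

/-- cast of `sum_powerset_neg_one_pow_card` to ℚ -/
lemma sum_powerset_neg_one_pow_card_rat {α : Type*} [DecidableEq α] (x : Finset α) :
    (∑ m ∈ x.powerset, (-1 : ℚ) ^ m.card) = if x = ∅ then 1 else 0 := by
  have h := Finset.sum_powerset_neg_one_pow_card (x := x)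
  have := congrArg (fun z : ℤ => (z : ℚ)) h
  push_cast at this
  simpa using this

/-- Inclusion–exclusion: the alternating sum over subsets `T` of `C` of the number of
magic matrices vanishing on `T` equals the number of magic matrices positive on all of `C`. -/
lemma inclusion_exclusion {n : ℕ} (G C : Finset (Fin n × Fin n)) (t : ℕ) :
    ∑ T ∈ C.powerset, (-1 : ℚ) ^ T.card * ((magicSet n (G \ T) t).card : ℚ)
      = (((magicSet n G t).filter (fun M => ∀ p ∈ C, M p.1 p.2 ≠ 0)).card : ℚ) := by
  have key : ∀ T ∈ C.powerset, (-1 : ℚ) ^ T.card * ((magicSet n (G \ T) t).card : ℚ)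
      = ∑ M ∈ magicSet n G t, (if ∀ p ∈ T, M p.1 p.2 = 0 then (-1 : ℚ) ^ T.card else 0) := by
    intro T _
    rw [magicSet_sdiff, Finset.card_filter]
    push_cast
    rw [Finset.mul_sum]
    refine Finset.sum_congr rfl fun M _ => ?_
    by_cases h : ∀ p ∈ T, M p.1 p.2 = 0 <;> simp [h]
  rw [Finset.sum_congr rfl key, Finset.sum_comm]
  rw [Finset.card_filter]
  push_cast
  refine Finset.sum_congr rfl fun M _ => ?_
  have hps : C.powerset.filter (fun T => ∀ p ∈ T, M p.1 p.2 = 0)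
      = (C.filter (fun p => M p.1 p.2 = 0)).powerset := by
    ext T
    simp only [Finset.mem_filter, Finset.mem_powerset, Finset.subset_iff, Finset.mem_filter]
    constructor
    · rintro ⟨h1, h2⟩
      exact fun {a} ha => ⟨h1 ha, h2 a ha⟩
    · intro h
      exact ⟨fun {a} ha => (h ha).1, fun a ha => (h ha).2⟩
  calc (∑ T ∈ C.powerset, if ∀ p ∈ T, M p.1 p.2 = 0 then (-1 : ℚ) ^ T.card else 0)
      = ∑ T ∈ C.powerset.filter (fun T => ∀ p ∈ T, M p.1 p.2 = 0), (-1 : ℚ) ^ T.card :=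
        (Finset.sum_filter _ _).symm
    _ = ∑ T ∈ (C.filter (fun p => M p.1 p.2 = 0)).powerset, (-1 : ℚ) ^ T.card := by rw [hps]
    _ = if C.filter (fun p => M p.1 p.2 = 0) = ∅ then 1 else 0 :=
        sum_powerset_neg_one_pow_card_rat _
    _ = if ∀ p ∈ C, M p.1 p.2 ≠ 0 then 1 else 0 := by
        congr 1
        simp only [eq_iff_iff, Finset.filter_eq_empty_iff]

/-- Subtracting a fixed "sub-magic" matrix `v` (row/col sums `r`) gives a bijection between
magic matrices of level `t + r` that dominate `v` and magic matrices of level `t`. -/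
lemma card_shift {n : ℕ} (G : Finset (Fin n × Fin n)) (v : Fin n → Fin n → ℕ) (r t : ℕ)
    (hvr : ∀ i, ∑ j, v i j = r) (hvc : ∀ j, ∑ i, v i j = r)
    (hvG : ∀ p : Fin n × Fin n, p ∉ G → v p.1 p.2 = 0) :
    ((magicSet n G (t + r)).filter (fun M => ∀ i j, v i j ≤ M i j)).card
      = (magicSet n G t).card := by
  refine Finset.card_bij' (fun M _ => fun i j => M i j - v i j)
    (fun N _ => fun i j => N i j + v i j) ?_ ?_ ?_ ?_
  · intro M hM
    rw [Finset.mem_filter] at hM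
    obtain ⟨hM, hle⟩ := hM
    rw [mem_magicSet] at hM ⊢
    obtain ⟨h1, h2, h3⟩ := hM
    refine ⟨fun i => ?_, fun j => ?_, fun p hp => ?_⟩
    · rw [Finset.sum_tsub_distrib _ (fun j _ => hle i j), h1 i, hvr i, Nat.add_sub_cancel]
    · rw [Finset.sum_tsub_distrib _ (fun i _ => hle i j), h2 j, hvc j, Nat.add_sub_cancel]
    · show M p.1 p.2 - v p.1 p.2 = 0
      rw [h3 p hp, Nat.zero_sub]
  · intro N hN
    rw [mem_magicSet] at hN
    obtain ⟨h1, h2, h3⟩ := hN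
    rw [Finset.mem_filter, mem_magicSet]
    refine ⟨⟨fun i => ?_, fun j => ?_, fun p hp => ?_⟩, fun i j => Nat.le_add_left _ _⟩
    · rw [Finset.sum_add_distrib, h1 i, hvr i]
    · rw [Finset.sum_add_distrib, h2 j, hvc j]
    · show N p.1 p.2 + v p.1 p.2 = 0
      rw [h3 p hp, hvG p hp]
  · intro M hM
    rw [Finset.mem_filter] at hM
    funext i j
    exact Nat.sub_add_cancel (hM.2 i j)
  · intro N _
    funext i j
    show N i j + v i j - v i j = N i j
    omega

/-- Hall's theorem: a magic matrix of positive level supported in `G` yields a permutation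
inside `G`. -/
lemma exists_perm_of_mem {n : ℕ} {G : Finset (Fin n × Fin n)} {t : ℕ} (ht : 0 < t)
    {M : Fin n → Fin n → ℕ} (hM : M ∈ magicSet n G t) :
    ∃ σ : Equiv.Perm (Fin n), ∀ i, (i, σ i) ∈ G := by
  rw [mem_magicSet] at hM
  obtain ⟨h1, h2, h3⟩ := hM
  have hall : ∀ s : Finset (Fin n),
      s.card ≤ (s.biUnion fun i => Finset.univ.filter fun j => 0 < M i j).card := by
    intro s
    set B := s.biUnion fun i => Finset.univ.filter fun j => 0 < M i j with hB
    have key : t * s.card ≤ t * B.card := by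
      calc t * s.card = ∑ _i ∈ s, t := by rw [Finset.sum_const, smul_eq_mul, mul_comm]
        _ = ∑ i ∈ s, ∑ j, M i j := Finset.sum_congr rfl fun i _ => (h1 i).symm
        _ = ∑ i ∈ s, ∑ j ∈ B, M i j := by
            refine Finset.sum_congr rfl fun i hi => ?_
            refine (Finset.sum_subset (Finset.subset_univ B) fun j _ hj => ?_).symm
            by_contra hne
            exact hj (Finset.mem_biUnion.mpr ⟨i, hi,
              Finset.mem_filter.mpr ⟨Finset.mem_univ j, Nat.pos_of_ne_zero hne⟩⟩)
        _ = ∑ j ∈ B, ∑ i ∈ s, M i j := Finset.sum_comm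
        _ ≤ ∑ j ∈ B, ∑ i, M i j :=
            Finset.sum_le_sum fun j _ =>
              Finset.sum_le_sum_of_subset (Finset.subset_univ s)
        _ = ∑ _j ∈ B, t := Finset.sum_congr rfl fun j _ => h2 j
        _ = t * B.card := by rw [Finset.sum_const, smul_eq_mul, mul_comm]
    exact Nat.le_of_mul_le_mul_left key ht
  obtain ⟨f, hfinj, hf⟩ :=
    (Finset.all_card_le_biUnion_card_iff_exists_injective _).mp hall
  refine ⟨Equiv.ofBijective f ((Finite.injective_iff_bijective).mp hfinj), fun i => ?_⟩
  have hfi : 0 < M i (f i) := (Finset.mem_filter.mp (hf i)).2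
  by_contra hg
  rw [h3 (i, f i) hg] at hfi
  exact Nat.lt_irrefl 0 hfi

/-- Discrete antiderivative: sums of polynomial values are polynomial (Faulhaber). -/
lemma exists_sum_poly (q : ℚ[X]) :
    ∃ Q : ℚ[X], ∀ m : ℕ, Q.eval (m : ℚ) = ∑ s ∈ Finset.range m, q.eval (s : ℚ) := by
  induction q using Polynomial.induction_on' with
  | add p r hp hr =>
    obtain ⟨P, hP⟩ := hp
    obtain ⟨R, hR⟩ := hr
    exact ⟨P + R, fun m => by simp [hP m, hR m, Finset.sum_add_distrib]⟩
  | monomial p a =>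
    refine ⟨Polynomial.C a * ∑ i ∈ Finset.range (p + 1),
      Polynomial.C (_root_.bernoulli i * ((p + 1).choose i : ℚ) / (p + 1)) * Polynomial.X ^ (p + 1 - i),
      fun m => ?_⟩
    rw [Polynomial.eval_mul, Polynomial.eval_C, Polynomial.eval_finset_sum]
    simp only [Polynomial.eval_mul, Polynomial.eval_C, Polynomial.eval_pow, Polynomial.eval_X,
      Polynomial.eval_monomial]
    have hfa := sum_range_pow m p
    calc a * ∑ i ∈ Finset.range (p + 1),
          _root_.bernoulli i * ((p + 1).choose i : ℚ) / (p + 1) * (m : ℚ) ^ (p + 1 - i)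
        = a * ∑ i ∈ Finset.range (p + 1),
          _root_.bernoulli i * ((p + 1).choose i : ℚ) * (m : ℚ) ^ (p + 1 - i) / (p + 1) := by
          congr 1
          exact Finset.sum_congr rfl fun i _ => by ring
      _ = a * ∑ k ∈ Finset.range m, (k : ℚ) ^ p := by rw [← hfa]
      _ = ∑ k ∈ Finset.range m, a * (k : ℚ) ^ p := Finset.mul_sum _ _ _

/-- Two rational polynomials agreeing on all positive naturals are equal. -/
lemma poly_eq_of_agree {p q : ℚ[X]} (h : ∀ t : ℕ, 1 ≤ t → p.eval (t : ℚ) = q.eval (t : ℚ)) :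
    p = q := by
  have hroot : p - q = 0 := by
    refine Polynomial.eq_zero_of_infinite_isRoot _ ?_
    refine Set.infinite_of_injective_forall_mem (f := fun t : ℕ => ((t + 1 : ℕ) : ℚ)) ?_ ?_
    · intro a b hab
      exact Nat.succ_injective (Nat.cast_injective hab)
    · intro t
      simp only [Set.mem_setOf_eq, Polynomial.IsRoot, Polynomial.eval_sub]
      rw [h (t + 1) (Nat.le_add_left 1 t)]
      ring
  have := sub_eq_zero.mp hroot
  exact this

/-- Main induction: the counting function of magic matrices supported in `G` agrees with a
polynomial for all `t ≥ 1`. -/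
lemma exists_poly (n : ℕ) (G : Finset (Fin n × Fin n)) :
    ∃ P : ℚ[X], ∀ t : ℕ, 1 ≤ t → P.eval (t : ℚ) = ((magicSet n G t).card : ℚ) := by
  induction G using Finset.strongInductionOn with
  | _ G ih =>
  by_cases hσ : ∃ σ : Equiv.Perm (Fin n), ∀ i, (i, σ i) ∈ G
  · obtain ⟨σ, hσG⟩ := hσ
    set C : Finset (Fin n × Fin n) := Finset.univ.image (fun i => (i, σ i)) with hC
    have hCG : C ⊆ G := by
      intro p hp
      rw [hC, Finset.mem_image] at hp
      obtain ⟨i, _, rfl⟩ := hp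
      exact hσG i
    -- recursive polynomials
    have choice : ∀ T : Finset (Fin n × Fin n), ∃ P : ℚ[X],
        (T ⊆ C → T.Nonempty → ∀ t : ℕ, 1 ≤ t →
          P.eval (t : ℚ) = ((magicSet n (G \ T) t).card : ℚ)) := by
      intro T
      by_cases h : T ⊆ C ∧ T.Nonempty
      · obtain ⟨P, hP⟩ := ih (G \ T) (Finset.sdiff_ssubset (h.1.trans hCG) h.2)
        exact ⟨P, fun _ _ => hP⟩
      · exact ⟨0, fun h1 h2 => absurd ⟨h1, h2⟩ h⟩
    choose Pf hPf using choice
    set q : ℚ[X] := ∑ T ∈ C.powerset.erase ∅, (Polynomial.C ((-1 : ℚ) ^ T.card)) * Pf T with hq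
    -- the permutation matrix
    set v : Fin n → Fin n → ℕ := fun i j => if j = σ i then 1 else 0 with hv
    have hvr : ∀ i, ∑ j, v i j = 1 := by
      intro i
      rw [hv]
      simp
    have hvc : ∀ j, ∑ i, v i j = 1 := by
      intro j
      rw [hv]
      have := Fintype.sum_equiv σ (fun i => if j = σ i then (1:ℕ) else 0)
        (fun k => if j = k then 1 else 0) (fun i => rfl)
      rw [this]
      simp
    have hvG : ∀ p : Fin n × Fin n, p ∉ G → v p.1 p.2 = 0 := by
      intro p hp
      rw [hv]
      simp only [ite_eq_right_iff]
      intro hpj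
      exfalso
      apply hp
      apply hCG
      rw [hC, Finset.mem_image]
      exact ⟨p.1, Finset.mem_univ _, by rw [← hpj]⟩
    have hmemC : ∀ p : Fin n × Fin n, p ∈ C ↔ p.2 = σ p.1 := by
      intro p
      rw [hC, Finset.mem_image]
      constructor
      · rintro ⟨i, _, rfl⟩; rfl
      · intro h
        refine ⟨p.1, Finset.mem_univ _, ?_⟩
        rw [← h]
    -- the step identity
    have step : ∀ t : ℕ, ((magicSet n G (t + 1)).card : ℚ)
        = ((magicSet n G t).card : ℚ) - q.eval ((t : ℚ) + 1) := by
      intro t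
      have hIE := inclusion_exclusion G C (t + 1)
      have hfilter : (magicSet n G (t + 1)).filter (fun M => ∀ p ∈ C, M p.1 p.2 ≠ 0)
          = (magicSet n G (t + 1)).filter (fun M => ∀ i j, v i j ≤ M i j) := by
        refine Finset.filter_congr fun M _ => ?_
        constructor
        · intro h i j
          by_cases hij : j = σ i
          · subst hij
            have hne := h (i, σ i) ((hmemC (i, σ i)).mpr rfl)
            show (if σ i = σ i then 1 else 0) ≤ M i (σ i)
            rw [if_pos rfl]
            exact Nat.one_le_iff_ne_zero.mpr hne
          · show (if j = σ i then 1 else 0) ≤ M i j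
            rw [if_neg hij]
            exact Nat.zero_le _
        · intro h p hp
          have h2 := (hmemC p).mp hp
          have h3 := h p.1 p.2
          simp only [hv, h2, if_pos rfl] at h3
          rw [h2]
          omega
      have hshift := card_shift G v 1 t hvr hvc hvG
      rw [hfilter] at hIE
      rw [hshift] at hIE
      -- split the empty set off the powerset sum
      have hsplit := Finset.add_sum_erase C.powerset
        (fun T => (-1 : ℚ) ^ T.card * ((magicSet n (G \ T) (t + 1)).card : ℚ))
        (Finset.empty_mem_powerset C)
      rw [← hsplit] at hIE
      simp only [Finset.card_empty, pow_zero, one_mul, Finset.sdiff_empty] at hIE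
      have hqeval : q.eval ((t : ℚ) + 1)
          = ∑ T ∈ C.powerset.erase ∅, (-1 : ℚ) ^ T.card
              * ((magicSet n (G \ T) (t + 1)).card : ℚ) := by
        rw [hq, Polynomial.eval_finset_sum]
        refine Finset.sum_congr rfl fun T hT => ?_
        rw [Polynomial.eval_mul, Polynomial.eval_C]
        congr 1
        have hTC : T ⊆ C := Finset.mem_powerset.mp (Finset.mem_of_mem_erase hT)
        have hTne : T.Nonempty :=
          Finset.nonempty_of_ne_empty (Finset.ne_of_mem_erase hT)
        have := hPf T hTC hTne (t + 1) (Nat.le_add_left 1 t)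
        push_cast at this ⊢
        exact this
      rw [hqeval]
      linarith [hIE]
    -- telescope
    obtain ⟨Q, hQ⟩ := exists_sum_poly ((-q).comp (Polynomial.X + Polynomial.C 1))
    refine ⟨Polynomial.C ((magicSet n G 0).card : ℚ) + Q, fun t _ => ?_⟩
    have tele : ∀ t : ℕ, ((magicSet n G t).card : ℚ)
        = ((magicSet n G 0).card : ℚ)
          + ∑ s ∈ Finset.range t, (-q).eval ((s : ℚ) + 1) := by
      intro t
      induction t with
      | zero => simp
      | succ t iht =>
        rw [Finset.sum_range_succ, ← add_assoc, ← iht, step t]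
        simp only [Polynomial.eval_neg]
        ring
    rw [Polynomial.eval_add, Polynomial.eval_C, hQ, tele t]
    congr 1
    refine Finset.sum_congr rfl fun s _ => ?_
    rw [Polynomial.eval_comp]
    simp
  · -- no permutation inside G : count is zero for t ≥ 1
    refine ⟨0, fun t ht => ?_⟩
    rw [Polynomial.eval_zero]
    have : magicSet n G t = ∅ := by
      rw [Finset.eq_empty_iff_forall_notMem]
      intro M hM
      exact hσ (exists_perm_of_mem (Nat.lt_of_lt_of_le Nat.zero_lt_one ht) hM)
    rw [this]
    simp

end BirkhoffZeros

/-- If `H` is the Ehrhart polynomial of the `n`-th Birkhoff polytope, then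
`H(-1) = H(-2) = ⋯ = H(-n+1) = 0`. -/
theorem birkhoff_ehrhart_zeros (n : ℕ) (hn : 1 ≤ n) (H : Polynomial ℚ)
    (hH : ∀ t : ℕ, 0 < t →
      H.eval (t : ℚ) = Nat.card {M : Matrix (Fin n) (Fin n) ℕ //
        (∀ i, ∑ j, M i j = t) ∧ (∀ j, ∑ i, M i j = t)}) :
    ∀ j : ℕ, 1 ≤ j → j ≤ n - 1 → H.eval (-(j : ℚ)) = 0 := by
  classical
  intro j hj1 hj2
  have hjn : j < n := by omega
  open BirkhoffZeros in
  -- identify Nat.card with our Finset count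
  have hcard : ∀ t : ℕ,
      (Nat.card {M : Matrix (Fin n) (Fin n) ℕ //
        (∀ i, ∑ j, M i j = t) ∧ (∀ j, ∑ i, M i j = t)} : ℚ)
      = ((magicSet n Finset.univ t).card : ℚ) := by
    intro t
    have hiff : ∀ M : Fin n → Fin n → ℕ,
        ((∀ i, ∑ j, M i j = t) ∧ (∀ j, ∑ i, M i j = t)) ↔ M ∈ magicSet n Finset.univ t := by
      intro M
      rw [mem_magicSet]
      constructor
      · rintro ⟨h1, h2⟩
        exact ⟨h1, h2, fun p hp => absurd (Finset.mem_univ p) hp⟩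
      · rintro ⟨h1, h2, _⟩
        exact ⟨h1, h2⟩
    congr 1
    calc Nat.card {M : Matrix (Fin n) (Fin n) ℕ //
          (∀ i, ∑ j, M i j = t) ∧ (∀ j, ∑ i, M i j = t)}
        = Nat.card {M : Fin n → Fin n → ℕ // M ∈ magicSet n Finset.univ t} :=
          Nat.card_congr (Equiv.subtypeEquivRight hiff)
      _ = (magicSet n Finset.univ t).card := Nat.card_eq_finsetCard _
  -- polynomials for all supports
  have choice : ∀ S : Finset (Fin n × Fin n), ∃ P : ℚ[X], ∀ t : ℕ, 1 ≤ t →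
      P.eval (t : ℚ) = ((magicSet n (Finset.univ \ S) t).card : ℚ) :=
    fun S => exists_poly n (Finset.univ \ S)
  choose Pf hPf using choice
  set Φ : ℚ[X] := ∑ S ∈ (Finset.univ : Finset (Fin n × Fin n)).powerset,
    (Polynomial.C ((-1 : ℚ) ^ S.card)) * Pf S with hΦ
  -- Φ counts strictly positive magic matrices, for t ≥ 1
  have hΦeval : ∀ t : ℕ, 1 ≤ t → Φ.eval (t : ℚ)
      = (((magicSet n Finset.univ t).filter
          (fun M => ∀ p ∈ (Finset.univ : Finset (Fin n × Fin n)), M p.1 p.2 ≠ 0)).card : ℚ) := by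
    intro t ht
    rw [hΦ, Polynomial.eval_finset_sum]
    rw [← inclusion_exclusion Finset.univ Finset.univ t]
    refine Finset.sum_congr rfl fun S _ => ?_
    rw [Polynomial.eval_mul, Polynomial.eval_C, hPf S t ht]
  -- positive count at levels < n is zero
  have hpos_small : ∀ t : ℕ, t < n →
      ((magicSet n Finset.univ t).filter
        (fun M => ∀ p ∈ (Finset.univ : Finset (Fin n × Fin n)), M p.1 p.2 ≠ 0)) = ∅ := by
    intro t htn
    rw [Finset.eq_empty_iff_forall_notMem]
    intro M hM
    rw [Finset.mem_filter] at hM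
    obtain ⟨hMm, hMpos⟩ := hM
    rw [mem_magicSet] at hMm
    have hrow := hMm.1 ⟨0, hn⟩
    have : (n : ℕ) ≤ ∑ j, M ⟨0, hn⟩ j := by
      calc (n : ℕ) = ∑ _j : Fin n, 1 := by simp
      _ ≤ ∑ j, M ⟨0, hn⟩ j :=
          Finset.sum_le_sum fun j _ =>
            Nat.one_le_iff_ne_zero.mpr (hMpos (⟨0, hn⟩, j) (Finset.mem_univ _))
    omega
  -- positive count at level t + n equals full count at level t
  have hpos_shift : ∀ t : ℕ,
      (((magicSet n Finset.univ (t + n)).filter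
        (fun M => ∀ p ∈ (Finset.univ : Finset (Fin n × Fin n)), M p.1 p.2 ≠ 0)).card : ℚ)
      = ((magicSet n Finset.univ t).card : ℚ) := by
    intro t
    have hfilter : (magicSet n Finset.univ (t + n)).filter
          (fun M => ∀ p ∈ (Finset.univ : Finset (Fin n × Fin n)), M p.1 p.2 ≠ 0)
        = (magicSet n Finset.univ (t + n)).filter
          (fun M => ∀ i j, (fun _ _ => 1 : Fin n → Fin n → ℕ) i j ≤ M i j) := by
      refine Finset.filter_congr fun M _ => ?_
      constructor
      · intro h i j
        have hne := h (i, j) (Finset.mem_univ _)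
        exact Nat.one_le_iff_ne_zero.mpr hne
      · intro h p _
        exact Nat.one_le_iff_ne_zero.mp (h p.1 p.2)
    rw [hfilter, card_shift Finset.univ (fun _ _ => 1) n t (by simp) (by simp)
      (fun p hp => absurd (Finset.mem_univ p) hp)]
  -- compare polynomials : Φ ∘ (X + n) = H
  have hcomp : Φ.comp (Polynomial.X + Polynomial.C (n : ℚ)) = H := by
    refine BirkhoffZeros.poly_eq_of_agree fun t ht => ?_
    rw [Polynomial.eval_comp]
    simp only [Polynomial.eval_add, Polynomial.eval_X, Polynomial.eval_C]
    have h1 : ((t : ℚ) + n) = ((t + n : ℕ) : ℚ) := by push_cast; ring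
    rw [h1, hΦeval (t + n) (by omega), hpos_shift t, hH t (by omega), hcard t]
  -- finish
  have hfin : H.eval (-(j : ℚ)) = Φ.eval ((n - j : ℕ) : ℚ) := by
    rw [← hcomp, Polynomial.eval_comp]
    simp only [Polynomial.eval_add, Polynomial.eval_X, Polynomial.eval_C]
    congr 1
    push_cast [Nat.cast_sub (le_of_lt hjn)]
    ring
  rw [hfin, hΦeval (n - j) (by omega), hpos_small (n - j) (by omega)]
  simp
end

section
/- The normalized leading coefficient of the Ehrhart polynomial of the third Birkhoff polytope gives vol B_3 = 9/8: precisely, the degree-4 coefficient of H_3 is 1/8, and multiplying by the lattice normalization factor 3^2 = 9 yields 9/8. -/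
open Polynomial Finset

def Pr (t : ℕ) (q : ℕ × ℕ × ℕ × ℕ) : Prop :=
  q.1 + q.2.1 ≤ t ∧ q.2.2.1 + q.2.2.2 ≤ t ∧ q.1 + q.2.2.1 ≤ t ∧
    q.2.1 + q.2.2.2 ≤ t ∧ t ≤ q.1 + q.2.1 + q.2.2.1 + q.2.2.2

instance (t : ℕ) : DecidablePred (Pr t) := fun _ => by unfold Pr; infer_instance

def cnt (t : ℕ) : ℕ :=
  ((range (t+1) ×ˢ range (t+1) ×ˢ range (t+1) ×ˢ range (t+1)).filter (Pr t)).card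

def e (t : ℕ) : {M : Matrix (Fin 3) (Fin 3) ℕ //
      (∀ i, ∑ j, M i j = t) ∧ (∀ j, ∑ i, M i j = t)} ≃ {q : ℕ × ℕ × ℕ × ℕ // Pr t q} where
  toFun M := ⟨(M.1 0 0, M.1 0 1, M.1 1 0, M.1 1 1), by
    obtain ⟨M, hr, hc⟩ := M
    have h0 := hr 0; have h1 := hr 1; have h2 := hr 2
    have g0 := hc 0; have g1 := hc 1; have g2 := hc 2
    simp only [Fin.sum_univ_three] at h0 h1 h2 g0 g1 g2
    unfold Pr; dsimp only; omega⟩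
  invFun q := ⟨Matrix.of ![![q.1.1, q.1.2.1, t - (q.1.1 + q.1.2.1)],
      ![q.1.2.2.1, q.1.2.2.2, t - (q.1.2.2.1 + q.1.2.2.2)],
      ![t - (q.1.1 + q.1.2.2.1), t - (q.1.2.1 + q.1.2.2.2),
        q.1.1 + q.1.2.1 + q.1.2.2.1 + q.1.2.2.2 - t]], by
    obtain ⟨⟨a, b, c, d⟩, hq⟩ := q
    unfold Pr at hq; dsimp only at hq ⊢
    obtain ⟨h1, h2, h3, h4, h5⟩ := hq
    constructor <;> intro i <;> fin_cases i <;>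
      simp [Fin.sum_univ_three] <;> omega⟩
  left_inv M := by
    obtain ⟨M, hr, hc⟩ := M
    have h0 := hr 0; have h1 := hr 1; have h2 := hr 2
    have g0 := hc 0; have g1 := hc 1; have g2 := hc 2
    simp only [Fin.sum_univ_three] at h0 h1 h2 g0 g1 g2
    apply Subtype.ext
    ext i j
    fin_cases i <;> fin_cases j <;> simp <;> omega
  right_inv q := by
    apply Subtype.ext
    rfl

lemma card_eq (t : ℕ) :
    Nat.card {M : Matrix (Fin 3) (Fin 3) ℕ //
      (∀ i, ∑ j, M i j = t) ∧ (∀ j, ∑ i, M i j = t)} = cnt t := by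
  rw [Nat.card_congr (e t)]
  have hset : {q : ℕ × ℕ × ℕ × ℕ | Pr t q} =
      ↑((range (t+1) ×ˢ range (t+1) ×ˢ range (t+1) ×ˢ range (t+1)).filter (Pr t)) := by
    ext ⟨a, b, c, d⟩
    simp only [Set.mem_setOf_eq, coe_filter, mem_product, mem_range, Set.mem_setOf_eq]
    unfold Pr; dsimp only
    constructor
    · intro h; omega
    · tauto
  calc Nat.card {q : ℕ × ℕ × ℕ × ℕ // Pr t q}
      = Set.ncard {q : ℕ × ℕ × ℕ × ℕ | Pr t q} := (Nat.card_coe_set_eq _)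
    _ = cnt t := by rw [hset, Set.ncard_coe_finset]; rfl

lemma cnt_le (t : ℕ) : cnt t ≤ (t+1)^4 := by
  unfold cnt
  calc _ ≤ (range (t+1) ×ˢ range (t+1) ×ˢ range (t+1) ×ˢ range (t+1)).card :=
        card_filter_le _ _
    _ = (t+1)^4 := by simp [card_product]; ring

set_option maxRecDepth 100000 in
lemma cnt_vals : cnt 1 = 6 ∧ cnt 2 = 21 ∧ cnt 3 = 55 ∧ cnt 4 = 120 ∧ cnt 5 = 231 := by
  decide

noncomputable def Pb : Polynomial ℚ :=
  C (1/8) * X^4 + C (3/4) * X^3 + C (15/8) * X^2 + C (9/4) * X + C 1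

lemma Pb_natDegree : Pb.natDegree ≤ 4 := by
  unfold Pb; compute_degree

lemma Pb_eval (x : ℚ) :
    Pb.eval x = (1/8)*x^4 + (3/4)*x^3 + (15/8)*x^2 + (9/4)*x + 1 := by
  simp [Pb]

lemma Pb_coeff : Pb.coeff 4 = 1/8 := by
  simp [Pb, coeff_X, coeff_one]

/-- If `H` is the Ehrhart polynomial of the third Birkhoff polytope (counting
3×3 semi-magic squares), then its degree-4 coefficient is `1/8`, and
multiplying by the lattice normalization factor `3² = 9` yields
`vol B₃ = 9/8`. -/
theorem birkhoff_B3_volume (H : Polynomial ℚ)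
    (hH : ∀ t : ℕ, 0 < t →
      H.eval (t : ℚ) = Nat.card {M : Matrix (Fin 3) (Fin 3) ℕ //
        (∀ i, ∑ j, M i j = t) ∧ (∀ j, ∑ i, M i j = t)}) :
    H.coeff 4 = 1 / 8 ∧ (3 : ℚ) ^ 2 * H.coeff 4 = 9 / 8 := by
  have hval : ∀ t : ℕ, 0 < t → H.eval (t : ℚ) = cnt t := by
    intro t ht; rw [hH t ht, card_eq]
  have hG : ((X + C 1 : Polynomial ℚ)^4) ≠ 0 := by
    intro h; have := congrArg (eval 0) h; simp at this
  have hdeg : H.degree ≤ 4 := by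
    by_contra hd
    push_neg at hd
    have hdG : ((X + C 1 : Polynomial ℚ)^4).degree = 4 := by
      rw [degree_pow, degree_X_add_C]; rfl
    have htend := Polynomial.abs_div_tendsto_atTop_of_degree_gt H ((X + C 1)^4)
      (by rw [hdG]; exact hd) hG
    have h2 : Filter.Tendsto (fun n : ℕ => |H.eval (n:ℚ) / eval (n:ℚ) ((X + C 1 : Polynomial ℚ)^4)|)
        Filter.atTop Filter.atTop := htend.comp tendsto_natCast_atTop_atTop
    obtain ⟨n, hn1, hn2⟩ := ((h2.eventually_gt_atTop 1).and (Filter.eventually_ge_atTop 1)).exists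
    have hpos : (0:ℚ) < ((n:ℚ)+1)^4 := by positivity
    have hevG : eval (n:ℚ) ((X + C 1 : Polynomial ℚ)^4) = ((n:ℚ)+1)^4 := by simp
    have hb : (cnt n : ℚ) ≤ ((n:ℚ)+1)^4 := by
      have := cnt_le n
      calc (cnt n : ℚ) ≤ ((((n+1)^4 : ℕ)) : ℚ) := by exact_mod_cast this
        _ = ((n:ℚ)+1)^4 := by push_cast; ring
    have hev : H.eval (n:ℚ) = cnt n := hval n hn2
    rw [hevG, hev] at hn1
    rw [abs_of_nonneg (by positivity)] at hn1
    have : (cnt n : ℚ) / ((n:ℚ)+1)^4 ≤ 1 := (div_le_one hpos).mpr hb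
    linarith
  have hHdeg : H.natDegree ≤ 4 := natDegree_le_iff_degree_le.mpr hdeg
  have hq0 : H - Pb = 0 := by
    apply Polynomial.eq_zero_of_natDegree_lt_card_of_eval_eq_zero' _ ({1,2,3,4,5} : Finset ℚ)
    · intro i hi
      obtain ⟨c1, c2, c3, c4, c5⟩ := cnt_vals
      have e1 := hval 1 (by norm_num); have e2 := hval 2 (by norm_num)
      have e3 := hval 3 (by norm_num); have e4 := hval 4 (by norm_num)
      have e5 := hval 5 (by norm_num)
      rw [c1] at e1; rw [c2] at e2; rw [c3] at e3; rw [c4] at e4; rw [c5] at e5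
      push_cast at e1 e2 e3 e4 e5
      simp only [Finset.mem_insert, Finset.mem_singleton] at hi
      rcases hi with rfl | rfl | rfl | rfl | rfl <;> rw [eval_sub, Pb_eval] <;>
        norm_num [e1, e2, e3, e4, e5]
    · have h1 : (H - Pb).natDegree ≤ 4 :=
        (natDegree_sub_le _ _).trans (by simp [hHdeg, Pb_natDegree])
      have h2 : ({1,2,3,4,5} : Finset ℚ).card = 5 := by norm_num
      omega
  have hHP : H = Pb := sub_eq_zero.mp hq0
  refine ⟨by rw [hHP, Pb_coeff], by rw [hHP, Pb_coeff]; norm_num⟩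
end
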